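/- The vertical sections of the double tower recover the invariant density: for every x ∈ I_β, the Lebesgue measure of {y ∈ ℝ : ∃ω ∈ Ω with (ω,x,y) ∈ E ∪ Ē} equals Σ_{n=0}^∞ (2β)^{−n} Σ_{w ∈ {0,1}ⁿ} ( χ_{[0, r(w)]}(x) + χ_{[1/(β−1) − r(w), 1/(β−1)]}(x) ), and this in turn equals Σ_{n=0}^∞ (2β)^{−n} Σ_{w ∈ {0,1}ⁿ} ( χ_{[0, R^n_{β,w}(1)]}(x) + χ_{[R^n_{β,w}(1/(β−1)−1), 1/(β−1)]}(x) ). -/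

import Mathlib

open MeasureTheory Set Filter
open scoped Classical ENNReal

namespace RandomBeta

noncomputable section

/-- The left shift on `{0,1}^ℕ`. -/
def shift (ω : ℕ → Bool) : ℕ → Bool := fun n => ω (n + 1)

/-- The digit complementation `ω̄ᵢ = 1 - ωᵢ`. -/
def compSeq (ω : ℕ → Bool) : ℕ → Bool := fun n => !(ω n)

/-- The interval `I_β = [0, 1/(β-1)]`. -/
def Ibeta (β : ℝ) : Set ℝ := Set.Icc 0 (1 / (β - 1))

/-- `L = [0, 1/β)`. -/
def Lset (β : ℝ) : Set ℝ := Set.Ico 0 (1 / β)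

/-- `S = [1/β, 1/(β(β-1))]`. -/
def Sset (β : ℝ) : Set ℝ := Set.Icc (1 / β) (1 / (β * (β - 1)))

/-- `R = (1/(β(β-1)), 1/(β-1)]`. -/
def Rset (β : ℝ) : Set ℝ := Set.Ioc (1 / (β * (β - 1))) (1 / (β - 1))

/-- The digit produced at the point `x` when the coin shows `a`:
`0` on `L`, `a` on `S`, `1` on `R`. -/
def digitB (β x : ℝ) (a : Bool) : Bool :=
  if x < 1 / β then false else if x ≤ 1 / (β * (β - 1)) then a else true

/-- One step of the random β-transformation on the second coordinate:
`T₀ x = βx` on `L`, `T_a x` on `S`, `T₁ x = βx - 1` on `R`. -/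
def rStep (β x : ℝ) (a : Bool) : ℝ := β * x - (if digitB β x a then 1 else 0)

/-- The random β-transformation in skew-product form. -/
def Rmap (β : ℝ) (p : (ℕ → Bool) × ℝ) : (ℕ → Bool) × ℝ :=
  (shift p.1, rStep β p.2 (p.1 0))

/-- The random β-transformation `K_β` (shifting `ω` only on `S`). -/
def Kmap (β : ℝ) (p : (ℕ → Bool) × ℝ) : (ℕ → Bool) × ℝ :=
  if p.2 < 1 / β then (p.1, β * p.2)
  else if p.2 ≤ 1 / (β * (β - 1)) then (shift p.1, β * p.2 - (if p.1 0 then 1 else 0))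
  else (p.1, β * p.2 - 1)

/-- `R^n_{β,w}(x)`: the second coordinate of `R_β^n (ω, x)` for any `ω` starting with `w`. -/
def rItin (β x : ℝ) (w : List Bool) : ℝ := w.foldl (rStep β) x

/-- `r(w) = R^n_{β,w}(1)`. -/
def rW (β : ℝ) (w : List Bool) : ℝ := rItin β 1 w

/-- The (unnormalised) density `ρ*_β`. -/
def rhoStar (β x : ℝ) : ℝ :=
  ∑' n : ℕ, ((2 * β) ^ n)⁻¹ * ∑ w : Fin n → Bool,
    ((Set.Icc (0 : ℝ) (rW β (List.ofFn w))).indicator 1 x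
      + (Set.Icc (rItin β (1 / (β - 1) - 1) (List.ofFn w)) (1 / (β - 1))).indicator 1 x)

/-- `m` is the `(1/2, 1/2)` Bernoulli measure on `{0,1}^ℕ`. -/
def IsBernoulliHalf (m : Measure (ℕ → Bool)) : Prop :=
  IsProbabilityMeasure m ∧
    ∀ (n : ℕ) (w : Fin n → Bool), m {ω | ∀ i : Fin n, ω i = w i} = (2 : ℝ≥0∞)⁻¹ ^ n

/-- The probability measure `μ_β` on `I_β` with density `ρ*_β / ∫ ρ*_β` w.r.t. Lebesgue. -/
def muBeta (β : ℝ) : Measure ℝ :=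
  (volume.restrict (Ibeta β)).withDensity
    (fun x => ENNReal.ofReal (rhoStar β x / ∫ y in Ibeta β, rhoStar β y))

/-- `l(w) = Σ ωᵢ 2^(i-1)`. -/
def lVal : List Bool → ℕ
  | [] => 0
  | a :: t => (if a then 1 else 0) + 2 * lVal t

/-- `v(w) = Σ_{k<n} β^(-k) + l(w)/(2β)^n`. -/
def vVal (β : ℝ) (w : List Bool) : ℝ :=
  (∑ k ∈ Finset.range w.length, ((β : ℝ) ^ k)⁻¹) + (lVal w : ℝ) / (2 * β) ^ w.length

/-- The sublevel `E_w = Ω × [0, r(w)] × [v(w), v(w) + (2β)^(-n))` of the tower. -/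
def Eset (β : ℝ) (w : List Bool) : Set ((ℕ → Bool) × ℝ × ℝ) :=
  {p | p.2.1 ∈ Set.Icc 0 (rW β w) ∧
    p.2.2 ∈ Set.Ico (vVal β w) (vVal β w + ((2 * β) ^ w.length)⁻¹)}

/-- The tower `E`. -/
def Etower (β : ℝ) : Set ((ℕ → Bool) × ℝ × ℝ) := ⋃ w : List Bool, Eset β w

/-- The step from `w` to `wa` is of type `T₁`. -/
def stepT1 (β : ℝ) (w : List Bool) (a : Bool) : Prop := digitB β (rW β w) a = true

/-- `C₁(wa) = v(wa) - v(w)/(2β)`. -/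
def C1 (β : ℝ) (w : List Bool) (a : Bool) : ℝ := vVal β (w ++ [a]) - vVal β w / (2 * β)

/-- `C₂(wa) = 1/(2β) + Σ (2β)^(-(m+1)) - v(w)/(2β)`, summing over pairs `(u, b)` with
the step `u → ub` of type `T₁` and `v(u) < v(w)`. -/
def C2 (β : ℝ) (w : List Bool) : ℝ :=
  (2 * β)⁻¹ +
    (∑' u : {q : List Bool × Bool // stepT1 β q.1 q.2 ∧ vVal β q.1 < vVal β w},
      ((2 * β) ^ (u.1.1.length + 1))⁻¹) - vVal β w / (2 * β)

/-- The action of `ψ` on points of the sublevel `E_w`. -/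
def psiAux (β : ℝ) (w : List Bool) (p : (ℕ → Bool) × ℝ × ℝ) : (ℕ → Bool) × ℝ × ℝ :=
  if digitB β (rW β w) (p.1 0) then
    if p.2.1 < 1 / β then (shift p.1, β * p.2.1, p.2.2 / (2 * β) + C2 β w)
    else (shift p.1, β * p.2.1 - 1, p.2.2 / (2 * β) + C1 β w (p.1 0))
  else (shift p.1, β * p.2.1, p.2.2 / (2 * β) + C1 β w (p.1 0))

/-- The tower map `ψ : E → E` (the identity off the tower). -/
def psi (β : ℝ) (p : (ℕ → Bool) × ℝ × ℝ) : (ℕ → Bool) × ℝ × ℝ :=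
  if h : ∃ w : List Bool, p ∈ Eset β w then psiAux β h.choose p else p

/-- The reflection `P(ω, x, y) = (ω̄, 1/(β-1) - x, -y)`. -/
def Pmap (β : ℝ) (p : (ℕ → Bool) × ℝ × ℝ) : (ℕ → Bool) × ℝ × ℝ :=
  (compSeq p.1, 1 / (β - 1) - p.2.1, -p.2.2)

/-- The reflected tower `Ē = P(E)`. -/
def Ebar (β : ℝ) : Set ((ℕ → Bool) × ℝ × ℝ) := Pmap β '' Etower β

/-- The exceptional set `F_w ⊆ E_w` (empty unless `r(w) ∈ R`). -/
def Fset (β : ℝ) (w : List Bool) : Set ((ℕ → Bool) × ℝ × ℝ) :=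
  {p | p ∈ Eset β w ∧ p.1 0 = false ∧ p.2.1 ∈ Sset β ∧ rW β w ∈ Rset β}

/-- The swap map `Q` interchanging `ψ(F_w)` with `ψ(F̄_w̄) = P(ψ(F_w))`. -/
def Qmap (β : ℝ) (p : (ℕ → Bool) × ℝ × ℝ) : (ℕ → Bool) × ℝ × ℝ :=
  if ∃ w : List Bool, p ∈ psi β '' Fset β w then (p.1, p.2.1 + 1, -p.2.2)
  else if ∃ w : List Bool, p ∈ Pmap β '' (psi β '' Fset β w) then (p.1, p.2.1 - 1, -p.2.2)
  else p

/-- `ψ` extended to `E ∪ Ē`, acting by `P ∘ ψ ∘ P⁻¹` on `Ē`. -/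
def psiFull (β : ℝ) (p : (ℕ → Bool) × ℝ × ℝ) : (ℕ → Bool) × ℝ × ℝ :=
  if p ∈ Etower β then psi β p else Pmap β (psi β (Pmap β p))

/-- The corrected tower map `ψ̃ = Q ∘ ψ`. -/
def psiTilde (β : ℝ) : ((ℕ → Bool) × ℝ × ℝ) → ((ℕ → Bool) × ℝ × ℝ) :=
  Qmap β ∘ psiFull β

/-- `h(ω, x, n) = #{0 ≤ i ≤ n-1 : π₂(K_β^i(ω,x)) ∈ S}`. -/
def hCount (β : ℝ) (ω : ℕ → Bool) (x : ℝ) (n : ℕ) : ℕ :=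
  ((Finset.range n).filter (fun i => ((Kmap β)^[i] (ω, x)).2 ∈ Sset β)).card

/-- `π_β(a) = Σ aᵢ β^(-(i+1))`. -/
def piB (β : ℝ) (a : ℕ → Bool) : ℝ :=
  ∑' i : ℕ, (if a i then (1 : ℝ) else 0) * ((β : ℝ) ^ (i + 1))⁻¹

/-- `𝒩ₙ(x; β)`: the number of words of length `n` extendable to a β-expansion of `x`. -/
def Ncount (β x : ℝ) (n : ℕ) : ℕ :=
  {a : Fin n → Bool | ∃ b : ℕ → Bool, (∀ i : Fin n, b i = a i) ∧ x = piB β b}.ncard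

end


section AuxProof

variable {β : ℝ}

lemma lVal_lt_two_pow (w : List Bool) : lVal w < 2 ^ w.length := by
  induction w with
  | nil => simp [lVal]
  | cons a t ih =>
      simp only [lVal, List.length_cons, pow_succ]
      cases a <;> simp <;> omega

lemma lVal_inj : ∀ {w w' : List Bool}, w.length = w'.length → lVal w = lVal w' → w = w' := by
  intro w
  induction w with
  | nil =>
      intro w' h _
      cases w' with
      | nil => rfl
      | cons b t' => simp at h
  | cons a t ih =>
      intro w' h hl
      cases w' with
      | nil => simp at h
      | cons b t' =>
          have h' : t.length = t'.length := by simpa using h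
          have hab : a = b := by
            cases a <;> cases b <;> simp [lVal] at hl ⊢ <;> omega
          subst hab
          have ht : lVal t = lVal t' := by
            cases a <;> simp [lVal] at hl <;> omega
          rw [ih h' ht]

/-- Partial sums `Σ_{k<n} β^{-k}`. -/
noncomputable def sP (β : ℝ) (n : ℕ) : ℝ := ∑ k ∈ Finset.range n, ((β : ℝ) ^ k)⁻¹

lemma sP_mono (hb : 0 < β) {m n : ℕ} (h : m ≤ n) : sP β m ≤ sP β n :=
  Finset.sum_le_sum_of_subset_of_nonneg (Finset.range_subset_range.mpr h)
    (fun k _ _ => by positivity)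

lemma sP_nonneg (hb : 0 < β) (n : ℕ) : 0 ≤ sP β n :=
  Finset.sum_nonneg fun k _ => by positivity

lemma vVal_eq_sP (w : List Bool) :
    vVal β w = sP β w.length + (lVal w : ℝ) / (2 * β) ^ w.length := rfl

lemma sP_le_vVal (hb : 0 < β) (w : List Bool) : sP β w.length ≤ vVal β w := by
  have h : 0 ≤ (lVal w : ℝ) / (2 * β) ^ w.length := by positivity
  rw [vVal_eq_sP]; linarith

lemma vVal_nonneg (hb : 0 < β) (w : List Bool) : 0 ≤ vVal β w :=
  le_trans (sP_nonneg hb w.length) (sP_le_vVal hb w)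

lemma vVal_upper (hb : 0 < β) (w : List Bool) :
    vVal β w + ((2 * β) ^ w.length)⁻¹ ≤ sP β (w.length + 1) := by
  have h2 : (0 : ℝ) < (2 * β) ^ w.length := by positivity
  have hl : (lVal w : ℝ) + 1 ≤ 2 ^ w.length := by
    have h := lVal_lt_two_pow w
    have h' : lVal w + 1 ≤ 2 ^ w.length := h
    exact_mod_cast h' 
  have key : (lVal w : ℝ) / (2 * β) ^ w.length + ((2 * β) ^ w.length)⁻¹
      ≤ ((β : ℝ) ^ w.length)⁻¹ := by
    rw [inv_eq_one_div, ← add_div]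
    have h1 : ((lVal w : ℝ) + 1) / (2 * β) ^ w.length
        ≤ ((2 : ℝ) ^ w.length) / (2 * β) ^ w.length := by gcongr
    have h2' : ((2 : ℝ) ^ w.length) / (2 * β) ^ w.length = ((β : ℝ) ^ w.length)⁻¹ := by
      rw [mul_pow]; field_simp
    linarith
  rw [vVal_eq_sP]
  have : sP β (w.length + 1) = sP β w.length + ((β : ℝ) ^ w.length)⁻¹ := by
    simp [sP, Finset.sum_range_succ]
  linarith

lemma vVal_sep_eq (hb : 0 < β) {w w' : List Bool} (hlen : w.length = w'.length)
    (hl : lVal w < lVal w') :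
    vVal β w + ((2 * β) ^ w.length)⁻¹ ≤ vVal β w' := by
  have h2 : (0 : ℝ) < (2 * β) ^ w.length := by positivity
  have hc : (lVal w : ℝ) + 1 ≤ (lVal w' : ℝ) := by exact_mod_cast hl
  rw [vVal_eq_sP, vVal_eq_sP, ← hlen]
  have key : (lVal w : ℝ) / (2 * β) ^ w.length + ((2 * β) ^ w.length)⁻¹
      ≤ (lVal w' : ℝ) / (2 * β) ^ w.length := by
    rw [inv_eq_one_div, ← add_div]
    gcongr
  linarith

lemma vVal_sep (hb : 0 < β) {w w' : List Bool} (hne : w ≠ w') :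
    vVal β w + ((2 * β) ^ w.length)⁻¹ ≤ vVal β w' ∨
      vVal β w' + ((2 * β) ^ w'.length)⁻¹ ≤ vVal β w := by
  rcases lt_trichotomy w.length w'.length with h | h | h
  · left
    calc vVal β w + ((2 * β) ^ w.length)⁻¹ ≤ sP β (w.length + 1) := vVal_upper hb w
      _ ≤ sP β w'.length := sP_mono hb h
      _ ≤ vVal β w' := sP_le_vVal hb w'
  · rcases lt_trichotomy (lVal w) (lVal w') with hl | hl | hl
    · exact Or.inl (vVal_sep_eq hb h hl)
    · exact absurd (lVal_inj h hl) hne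
    · exact Or.inr (vVal_sep_eq hb h.symm hl)
  · right
    calc vVal β w' + ((2 * β) ^ w'.length)⁻¹ ≤ sP β (w'.length + 1) := vVal_upper hb w'
      _ ≤ sP β w.length := sP_mono hb h
      _ ≤ vVal β w := sP_le_vVal hb w

/-- The horizontal slice of `E_w` at height `x` (as a set of `y`'s). -/
noncomputable def posSet (β x : ℝ) (w : List Bool) : Set ℝ :=
  if x ∈ Set.Icc 0 (rW β w) then
    Set.Ico (vVal β w) (vVal β w + ((2 * β) ^ w.length)⁻¹) else ∅

/-- The horizontal slice of `P(E_w)` at height `x`. -/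
noncomputable def negSet (β x : ℝ) (w : List Bool) : Set ℝ :=
  if 1 / (β - 1) - x ∈ Set.Icc 0 (rW β w) then
    Set.Ioc (-(vVal β w + ((2 * β) ^ w.length)⁻¹)) (-(vVal β w)) else ∅

lemma mem_posSet {x y : ℝ} {w : List Bool} :
    y ∈ posSet β x w ↔ x ∈ Set.Icc 0 (rW β w) ∧
      y ∈ Set.Ico (vVal β w) (vVal β w + ((2 * β) ^ w.length)⁻¹) := by
  unfold posSet; split_ifs with h <;> simp [h]

lemma mem_negSet {x y : ℝ} {w : List Bool} :
    y ∈ negSet β x w ↔ 1 / (β - 1) - x ∈ Set.Icc 0 (rW β w) ∧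
      (-y) ∈ Set.Ico (vVal β w) (vVal β w + ((2 * β) ^ w.length)⁻¹) := by
  unfold negSet
  split_ifs with h
  · simp only [h, true_and, Set.mem_Ioc, Set.mem_Ico]
    constructor <;> intro hy <;> constructor <;> linarith [hy.1, hy.2]
  · simp only [Set.mem_empty_iff_false, false_iff, not_and]
    exact fun hc => absurd hc h

lemma posSet_disj (hb : 0 < β) (x : ℝ) :
    Pairwise (Function.onFun Disjoint (posSet β x)) := by
  intro w w' hne
  rw [Function.onFun, Set.disjoint_left]
  intro y hy hy'
  rw [mem_posSet] at hy hy'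
  rcases vVal_sep hb hne with h | h
  · have := hy.2.2; have := hy'.2.1; linarith
  · have := hy'.2.2; have := hy.2.1; linarith

lemma negSet_disj (hb : 0 < β) (x : ℝ) :
    Pairwise (Function.onFun Disjoint (negSet β x)) := by
  intro w w' hne
  rw [Function.onFun, Set.disjoint_left]
  intro y hy hy'
  rw [mem_negSet] at hy hy'
  rcases vVal_sep hb hne with h | h
  · have := hy.2.2; have := hy'.2.1; linarith
  · have := hy'.2.2; have := hy.2.1; linarith

lemma posSet_meas (x : ℝ) (w : List Bool) : MeasurableSet (posSet β x w) := by
  unfold posSet; split_ifs <;> [exact measurableSet_Ico; exact MeasurableSet.empty]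

lemma negSet_meas (x : ℝ) (w : List Bool) : MeasurableSet (negSet β x w) := by
  unfold negSet; split_ifs <;> [exact measurableSet_Ioc; exact MeasurableSet.empty]

lemma posSet_subset (hb : 0 < β) (x : ℝ) (w : List Bool) : posSet β x w ⊆ Set.Ici 0 := by
  intro y hy
  rw [mem_posSet] at hy
  exact le_trans (vVal_nonneg hb w) hy.2.1

lemma negSet_subset (hb : 0 < β) (x : ℝ) (w : List Bool) : negSet β x w ⊆ Set.Iic 0 := by
  intro y hy
  rw [mem_negSet] at hy
  have h1 := vVal_nonneg hb w
  have h2 := hy.2.1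
  simp only [Set.mem_Iic]
  linarith

lemma vol_posSet (hb : 0 < β) (x : ℝ) (w : List Bool) :
    volume (posSet β x w)
      = ENNReal.ofReal (((2 * β) ^ w.length)⁻¹ * (Set.Icc (0 : ℝ) (rW β w)).indicator 1 x) := by
  unfold posSet
  split_ifs with h
  · rw [Real.volume_Ico, Set.indicator_of_mem h]
    simp only [Pi.one_apply, mul_one]
    congr 1; ring
  · rw [Set.indicator_of_notMem h]
    simp

lemma mem_refl_Icc {x : ℝ} {w : List Bool} :
    1 / (β - 1) - x ∈ Set.Icc 0 (rW β w)
      ↔ x ∈ Set.Icc (1 / (β - 1) - rW β w) (1 / (β - 1)) := by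
  simp only [Set.mem_Icc]
  constructor <;> intro h <;> constructor <;> linarith [h.1, h.2]

lemma vol_negSet (hb : 0 < β) (x : ℝ) (w : List Bool) :
    volume (negSet β x w)
      = ENNReal.ofReal (((2 * β) ^ w.length)⁻¹
          * (Set.Icc (1 / (β - 1) - rW β w) (1 / (β - 1))).indicator 1 x) := by
  unfold negSet
  split_ifs with h
  · rw [Real.volume_Ioc, Set.indicator_of_mem (mem_refl_Icc.mp h)]
    simp only [Pi.one_apply, mul_one]
    congr 1; ring
  · rw [Set.indicator_of_notMem (fun hc => h (mem_refl_Icc.mpr hc))]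
    simp

lemma Pmap_invol (β : ℝ) : Function.Involutive (Pmap β) := by
  intro p
  unfold Pmap compSeq
  refine Prod.ext ?_ (Prod.ext ?_ ?_)
  · funext n; simp
  · simp
  · simp

lemma mem_Ebar {q : (ℕ → Bool) × ℝ × ℝ} : q ∈ Ebar β ↔ Pmap β q ∈ Etower β := by
  constructor
  · rintro ⟨p, hp, rfl⟩; rwa [Pmap_invol β p]
  · intro h; exact ⟨Pmap β q, h, Pmap_invol β q⟩

lemma ind_nonneg (s : Set ℝ) (x : ℝ) : 0 ≤ s.indicator (1 : ℝ → ℝ) x :=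
  Set.indicator_nonneg (fun _ _ => zero_le_one) x

lemma ind_le_one (s : Set ℝ) (x : ℝ) : s.indicator (1 : ℝ → ℝ) x ≤ 1 := by
  classical
  by_cases h : x ∈ s <;> simp [h]

lemma summable_rho (hb : 1 < β) (x : ℝ) :
    Summable (fun n : ℕ => ((2 * β) ^ n)⁻¹ * ∑ w : Fin n → Bool,
      ((Set.Icc (0 : ℝ) (rW β (List.ofFn w))).indicator 1 x
        + (Set.Icc (1 / (β - 1) - rW β (List.ofFn w)) (1 / (β - 1))).indicator 1 x)) := by
  have hβ0 : (0 : ℝ) < β := lt_trans one_pos hb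
  refine Summable.of_nonneg_of_le (fun n => ?_) (fun n => ?_)
    ((summable_geometric_of_lt_one (le_of_lt (inv_pos.mpr hβ0)) (inv_lt_one_of_one_lt₀ hb)).mul_left 2)
  · refine mul_nonneg (by positivity) (Finset.sum_nonneg fun w _ => ?_)
    exact add_nonneg (ind_nonneg _ _) (ind_nonneg _ _)
  · have hcard : (∑ w : Fin n → Bool,
        ((Set.Icc (0 : ℝ) (rW β (List.ofFn w))).indicator 1 x
          + (Set.Icc (1 / (β - 1) - rW β (List.ofFn w)) (1 / (β - 1))).indicator 1 x))
        ≤ (2 : ℝ) ^ n * 2 := by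
      calc (∑ w : Fin n → Bool,
            ((Set.Icc (0 : ℝ) (rW β (List.ofFn w))).indicator 1 x
              + (Set.Icc (1 / (β - 1) - rW β (List.ofFn w)) (1 / (β - 1))).indicator 1 x))
          ≤ ∑ _w : Fin n → Bool, (2 : ℝ) :=
            Finset.sum_le_sum fun w _ => by
              linarith [ind_le_one (Set.Icc (0 : ℝ) (rW β (List.ofFn w))) x,
                ind_le_one (Set.Icc (1 / (β - 1) - rW β (List.ofFn w)) (1 / (β - 1))) x]
        _ = (Fintype.card (Fin n → Bool) : ℝ) * 2 := by
            rw [Finset.sum_const, nsmul_eq_mul]; simp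
        _ = (2 : ℝ) ^ n * 2 := by
            rw [Fintype.card_fun]; simp
    calc ((2 * β) ^ n)⁻¹ * ∑ w : Fin n → Bool,
          ((Set.Icc (0 : ℝ) (rW β (List.ofFn w))).indicator 1 x
            + (Set.Icc (1 / (β - 1) - rW β (List.ofFn w)) (1 / (β - 1))).indicator 1 x)
        ≤ ((2 * β) ^ n)⁻¹ * ((2 : ℝ) ^ n * 2) := by
          exact mul_le_mul_of_nonneg_left hcard (by positivity)
      _ = 2 * (β⁻¹) ^ n := by
          rw [mul_pow]
          field_simp
          rw [← mul_pow, mul_one_div_cancel hβ0.ne', one_pow]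
  
lemma vol_union_pos_neg {A B : Set ℝ} (hA : A ⊆ Set.Ici 0) (hB : B ⊆ Set.Iic 0) :
    volume (A ∪ B) = volume A + volume B := by
  have hB0 : B ∩ Set.Ici 0 ⊆ {(0 : ℝ)} := fun y hy =>
    Set.mem_singleton_iff.mpr (le_antisymm (hB hy.1) hy.2)
  have hnullB : volume (B ∩ Set.Ici 0) = 0 :=
    measure_mono_null hB0 (by simp)
  have h1 : volume ((A ∪ B) ∩ Set.Ici 0) + volume ((A ∪ B) \ Set.Ici 0) = volume (A ∪ B) :=
    measure_inter_add_diff _ measurableSet_Ici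
  have e1 : (A ∪ B) ∩ Set.Ici 0 = A ∪ (B ∩ Set.Ici 0) := by
    rw [Set.union_inter_distrib_right, Set.inter_eq_left.mpr hA]
  have v1 : volume ((A ∪ B) ∩ Set.Ici 0) = volume A := by
    rw [e1]
    refine le_antisymm ?_ (measure_mono Set.subset_union_left)
    calc volume (A ∪ B ∩ Set.Ici 0) ≤ volume A + volume (B ∩ Set.Ici 0) := measure_union_le _ _
      _ = volume A := by rw [hnullB, add_zero]
  have v2 : volume ((A ∪ B) \ Set.Ici 0) = volume B := by
    have e2 : (A ∪ B) \ Set.Ici 0 = B \ Set.Ici 0 := by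
      rw [Set.union_diff_distrib, Set.diff_eq_empty.mpr hA, Set.empty_union]
    rw [e2]
    have h2 : volume (B ∩ Set.Ici 0) + volume (B \ Set.Ici 0) = volume B :=
      measure_inter_add_diff _ measurableSet_Ici
    rw [hnullB, zero_add] at h2
    exact h2
  rw [← h1, v1, v2]

lemma digitB_compl (hb : 1 < β) (hb2 : β < 2) (x : ℝ) (a : Bool) :
    digitB β (1 / (β - 1) - x) (!a) = !(digitB β x a) := by
  have hβ0 : (0 : ℝ) < β := by linarith
  have hβ1 : (0 : ℝ) < β - 1 := by linarith
  have hkey : 1 / (β - 1) - 1 / β = 1 / (β * (β - 1)) := by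
    field_simp
    ring
  have h12 : 1 / β ≤ 1 / (β * (β - 1)) := by
    rw [div_le_div_iff₀ hβ0 (by positivity)]
    nlinarith
  unfold digitB
  split_ifs with h1 h2 h3 h4 h5 h6 h7 h8 <;>
    first
      | rfl
      | (exfalso; linarith)

lemma rStep_compl (hb : 1 < β) (hb2 : β < 2) (x : ℝ) (a : Bool) :
    rStep β (1 / (β - 1) - x) (!a) = 1 / (β - 1) - rStep β x a := by
  have hβ1 : (0 : ℝ) < β - 1 := by linarith
  unfold rStep
  rw [digitB_compl hb hb2]
  have hne : β - 1 ≠ 0 := ne_of_gt hβ1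
  cases digitB β x a <;> simp <;> field_simp <;> ring

lemma rItin_compl (hb : 1 < β) (hb2 : β < 2) :
    ∀ (w : List Bool) (x : ℝ),
      rItin β (1 / (β - 1) - x) (w.map (fun b => !b)) = 1 / (β - 1) - rItin β x w := by
  intro w
  induction w with
  | nil => intro x; rfl
  | cons a t ih =>
      intro x
      show rItin β (rStep β (1 / (β - 1) - x) (!a)) (t.map (fun b => !b))
        = 1 / (β - 1) - rItin β (rStep β x a) t
      rw [rStep_compl hb hb2]
      exact ih (rStep β x a)

lemma part2sum (hb : 1 < β) (hb2 : β < 2) (x : ℝ) (n : ℕ) :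
    (∑ w : Fin n → Bool,
        ((Set.Icc (1 / (β - 1) - rW β (List.ofFn w)) (1 / (β - 1))).indicator 1 x : ℝ))
      = ∑ w : Fin n → Bool,
          (Set.Icc (rItin β (1 / (β - 1) - 1) (List.ofFn w)) (1 / (β - 1))).indicator 1 x := by
  have inv : Function.Involutive (fun w : Fin n → Bool => fun i => !(w i)) := by
    intro w; funext i; simp
  refine Fintype.sum_equiv (Function.Involutive.toPerm _ inv) _ _ (fun w => ?_)
  have key : rItin β (1 / (β - 1) - 1) (List.ofFn (fun i => !(w i)))
      = 1 / (β - 1) - rW β (List.ofFn w) := by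
    have h := rItin_compl hb hb2 (List.ofFn w) 1
    rw [List.map_ofFn] at h
    exact h
  show (Set.Icc (1 / (β - 1) - rW β (List.ofFn w)) (1 / (β - 1))).indicator 1 x
      = (Set.Icc (rItin β (1 / (β - 1) - 1) (List.ofFn (fun i => !(w i)))) (1 / (β - 1))).indicator 1 x
  rw [key]

end AuxProof

/-- the vertical sections of the double tower recover the invariant density: for
every `x ∈ I_β` the Lebesgue measure of `{y : ∃ ω, (ω,x,y) ∈ E ∪ Ē}` equals
`Σ_n (2β)^{-n} Σ_{w ∈ {0,1}ⁿ} (χ_{[0,r(w)]}(x) + χ_{[1/(β-1)-r(w), 1/(β-1)]}(x))`, and this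
equals `ρ*_β(x)`. -/
theorem stmt15 (β : ℝ) (hβ : 1 < β ∧ β < 2) (x : ℝ) (hx : x ∈ Ibeta β) :
    volume {y : ℝ | ∃ ω : ℕ → Bool, (ω, x, y) ∈ Etower β ∪ Ebar β}
      = ENNReal.ofReal (∑' n : ℕ, ((2 * β) ^ n)⁻¹ * ∑ w : Fin n → Bool,
          ((Set.Icc (0 : ℝ) (rW β (List.ofFn w))).indicator 1 x
            + (Set.Icc (1 / (β - 1) - rW β (List.ofFn w)) (1 / (β - 1))).indicator 1 x)) ∧
    (∑' n : ℕ, ((2 * β) ^ n)⁻¹ * ∑ w : Fin n → Bool,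
        ((Set.Icc (0 : ℝ) (rW β (List.ofFn w))).indicator 1 x
          + (Set.Icc (1 / (β - 1) - rW β (List.ofFn w)) (1 / (β - 1))).indicator 1 x))
      = rhoStar β x := by
  obtain ⟨hb, hb2⟩ := hβ
  have hβ0 : (0 : ℝ) < β := by linarith
  constructor
  · have hset : {y : ℝ | ∃ ω : ℕ → Bool, (ω, x, y) ∈ Etower β ∪ Ebar β}
        = (⋃ w : List Bool, posSet β x w) ∪ (⋃ w : List Bool, negSet β x w) := by
      ext y
      simp only [Set.mem_setOf_eq, Set.mem_union, Set.mem_iUnion]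
      constructor
      · rintro ⟨ω, h | h⟩
        · simp only [Etower, Set.mem_iUnion, Eset, Set.mem_setOf_eq] at h
          obtain ⟨w, hw⟩ := h
          exact Or.inl ⟨w, mem_posSet.mpr ⟨hw.1, hw.2⟩⟩
        · rw [mem_Ebar] at h
          simp only [Etower, Set.mem_iUnion, Eset, Set.mem_setOf_eq, Pmap] at h
          obtain ⟨w, hw⟩ := h
          exact Or.inr ⟨w, mem_negSet.mpr ⟨hw.1, hw.2⟩⟩
      · rintro (⟨w, hw⟩ | ⟨w, hw⟩)
        · have h := mem_posSet.mp hw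
          refine ⟨fun _ => false, Or.inl ?_⟩
          simp only [Etower, Set.mem_iUnion, Eset, Set.mem_setOf_eq]
          exact ⟨w, h.1, h.2⟩
        · have h := mem_negSet.mp hw
          refine ⟨fun _ => false, Or.inr (mem_Ebar.mpr ?_)⟩
          simp only [Etower, Set.mem_iUnion, Eset, Set.mem_setOf_eq, Pmap]
          exact ⟨w, h.1, h.2⟩
    have hterm : ∀ w : List Bool, volume (posSet β x w) + volume (negSet β x w)
        = ENNReal.ofReal (((2 * β) ^ w.length)⁻¹
            * ((Set.Icc (0 : ℝ) (rW β w)).indicator 1 x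
              + (Set.Icc (1 / (β - 1) - rW β w) (1 / (β - 1))).indicator 1 x)) := by
      intro w
      rw [vol_posSet hβ0, vol_negSet hβ0, ← ENNReal.ofReal_add
        (mul_nonneg (by positivity) (ind_nonneg _ _))
        (mul_nonneg (by positivity) (ind_nonneg _ _)), mul_add]
    set F : List Bool → ℝ≥0∞ := fun w => ENNReal.ofReal (((2 * β) ^ w.length)⁻¹
        * ((Set.Icc (0 : ℝ) (rW β w)).indicator 1 x
          + (Set.Icc (1 / (β - 1) - rW β w) (1 / (β - 1))).indicator 1 x)) with hF
    have hre : (∑' w : List Bool, F w) = ∑' n : ℕ, ∑ w : Fin n → Bool, F (List.ofFn w) := by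
      rw [← Equiv.tsum_eq (@List.equivSigmaTuple Bool).symm F, ENNReal.tsum_sigma']
      exact tsum_congr fun n => tsum_fintype _
    have hfin : ∀ n : ℕ, (∑ w : Fin n → Bool, F (List.ofFn w))
        = ENNReal.ofReal (((2 * β) ^ n)⁻¹ * ∑ w : Fin n → Bool,
            ((Set.Icc (0 : ℝ) (rW β (List.ofFn w))).indicator 1 x
              + (Set.Icc (1 / (β - 1) - rW β (List.ofFn w)) (1 / (β - 1))).indicator 1 x)) := by
      intro n
      have h1 : ∀ w : Fin n → Bool, F (List.ofFn w)
          = ENNReal.ofReal (((2 * β) ^ n)⁻¹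
              * ((Set.Icc (0 : ℝ) (rW β (List.ofFn w))).indicator 1 x
                + (Set.Icc (1 / (β - 1) - rW β (List.ofFn w)) (1 / (β - 1))).indicator 1 x)) := by
        intro w
        rw [hF]
        simp only [List.length_ofFn]
      rw [Finset.sum_congr rfl (fun w _ => h1 w), ← ENNReal.ofReal_sum_of_nonneg
        (fun w _ => mul_nonneg (by positivity)
          (add_nonneg (ind_nonneg _ _) (ind_nonneg _ _))), ← Finset.mul_sum]
    calc volume {y : ℝ | ∃ ω : ℕ → Bool, (ω, x, y) ∈ Etower β ∪ Ebar β}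
        = volume (⋃ w : List Bool, posSet β x w) + volume (⋃ w : List Bool, negSet β x w) := by
          rw [hset]
          exact vol_union_pos_neg (Set.iUnion_subset (posSet_subset hβ0 x))
            (Set.iUnion_subset (negSet_subset hβ0 x))
      _ = (∑' w : List Bool, volume (posSet β x w)) + ∑' w : List Bool, volume (negSet β x w) := by
          rw [measure_iUnion (posSet_disj hβ0 x) (posSet_meas x),
            measure_iUnion (negSet_disj hβ0 x) (negSet_meas x)]
      _ = ∑' w : List Bool, (volume (posSet β x w) + volume (negSet β x w)) :=
          (ENNReal.tsum_add).symm
      _ = ∑' w : List Bool, F w := tsum_congr hterm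
      _ = ∑' n : ℕ, ∑ w : Fin n → Bool, F (List.ofFn w) := hre
      _ = ∑' n : ℕ, ENNReal.ofReal (((2 * β) ^ n)⁻¹ * ∑ w : Fin n → Bool,
            ((Set.Icc (0 : ℝ) (rW β (List.ofFn w))).indicator 1 x
              + (Set.Icc (1 / (β - 1) - rW β (List.ofFn w)) (1 / (β - 1))).indicator 1 x)) :=
          tsum_congr hfin
      _ = ENNReal.ofReal (∑' n : ℕ, ((2 * β) ^ n)⁻¹ * ∑ w : Fin n → Bool,
            ((Set.Icc (0 : ℝ) (rW β (List.ofFn w))).indicator 1 x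
              + (Set.Icc (1 / (β - 1) - rW β (List.ofFn w)) (1 / (β - 1))).indicator 1 x)) := by
          rw [ENNReal.ofReal_tsum_of_nonneg (fun n => mul_nonneg (by positivity)
            (Finset.sum_nonneg fun w _ => add_nonneg (ind_nonneg _ _) (ind_nonneg _ _)))
            (summable_rho hb x)]
  · simp only [rhoStar]
    refine tsum_congr fun n => ?_
    congr 1
    rw [Finset.sum_add_distrib, Finset.sum_add_distrib, part2sum hb hb2 x n]

end RandomBeta
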